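/- Let j ≥ 0 be a half-integer and m₁, m₂ half-integers with j+m₁, j+m₂ ∈ ℤ, −j ≤ m₁, m₂ ≤ j and m₁ ≥ m₂. Then for every θ ∈ (0, π): d^j_{m₁,m₂}(θ) = ( sin(θ/2)^{m₁−m₂} · cos(θ/2)^{2j−m₁+m₂} / ((j−m₁)! · (m₁−m₂)! · (j+m₂)!) ) · Σ_{s=0}^{j−m₁} ( (−j+m₁)_s · (−j−m₂)_s / ((1+m₁−m₂)_s · s!) ) · (−tan(θ/2)²)^s, where (a)_s = a(a+1)⋯(a+s−1) denotes the rising factorial (Pochhammer symbol) with (a)_0 = 1. -/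

import Mathlib

/-- A half-integer is an element of `(1/2)ℤ`. -/
def HalfInt (x : ℝ) : Prop := ∃ k : ℤ, x = k / 2

/-- The little Wigner d-function `d^j_{m₁,m₂}(θ)`, defined as the finite sum
`Σ_p (−1)^{m₂−m₁+p} / ((j+m₁−p)!·p!·(m₂−m₁+p)!·(j−m₂−p)!) · sin(θ/2)^{m₂−m₁+2p} ·
cos(θ/2)^{2j+m₁−m₂−2p}` over integers `p` with `max(0, m₁−m₂) ≤ p ≤ min(j−m₂, j+m₁)`
(the factorials of the nonnegative integers appearing are expressed via the Gamma
function, `x! = Γ(x+1)`). -/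
noncomputable def wignerd (j m₁ m₂ θ : ℝ) : ℝ :=
  ∑ p ∈ Finset.Icc (max 0 ⌈m₁ - m₂⌉) ⌊min (j - m₂) (j + m₁)⌋,
    (-1 : ℝ) ^ (⌈m₂ - m₁⌉ + p) /
      (Real.Gamma (j + m₁ - (p : ℝ) + 1) * Real.Gamma ((p : ℝ) + 1) *
        Real.Gamma (m₂ - m₁ + (p : ℝ) + 1) * Real.Gamma (j - m₂ - (p : ℝ) + 1)) *
      Real.sin (θ / 2) ^ (⌈m₂ - m₁⌉ + 2 * p) *
      Real.cos (θ / 2) ^ (⌊2 * j + m₁ - m₂⌋ - 2 * p)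

open Classical in
/-- The Wigner D-function `W^{(j,n)}_{m₁,m₂}(ζ,ψ,θ,φ)`, with the convention that it is `0`
if `m₁` or `m₂` lies outside `[−j, j]` or `j ± m₁ ∉ ℤ` or `j ± m₂ ∉ ℤ`. -/
noncomputable def WignerD (j n m₁ m₂ : ℝ) (ζ ψ θ φ : ℝ) : ℂ :=
  if (-j ≤ m₁ ∧ m₁ ≤ j) ∧ (-j ≤ m₂ ∧ m₂ ≤ j) ∧
      (∃ a : ℤ, j + m₁ = a) ∧ (∃ a : ℤ, j - m₁ = a) ∧
      (∃ a : ℤ, j + m₂ = a) ∧ (∃ a : ℤ, j - m₂ = a) then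
    ((Real.sqrt (Real.Gamma (j + m₁ + 1) * Real.Gamma (j - m₁ + 1)) *
        Real.sqrt (Real.Gamma (j + m₂ + 1) * Real.Gamma (j - m₂ + 1)) : ℝ) : ℂ) *
      Complex.exp (Complex.I * n * ζ) *
      Complex.exp (Complex.I * (m₁ * ψ + m₂ * φ)) * ((wignerd j m₁ m₂ θ : ℝ) : ℂ)
  else 0

open Polynomial in
private lemma asc_eval_neg_nat (m s : ℕ) :
    (ascPochhammer ℝ s).eval (-(m : ℝ)) = (-1 : ℝ) ^ s * (m.descFactorial s : ℝ) := by
  rw [ascPochhammer_eval_neg_eq_descPochhammer, descPochhammer_eval_eq_descFactorial]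

open Polynomial in
private lemma asc_eval_nat_succ (k s : ℕ) :
    (ascPochhammer ℝ s).eval ((k : ℝ) + 1) = ((k+1).ascFactorial s : ℝ) := by
  rw [Nat.cast_ascFactorial]; push_cast; ring_nf


open Polynomial in
/-- The hypergeometric expression (3.14) for the little Wigner d-function when `m₁ ≥ m₂`:
`d^j_{m₁,m₂}(θ) = sin(θ/2)^{m₁−m₂} cos(θ/2)^{2j−m₁+m₂} / ((j−m₁)!(m₁−m₂)!(j+m₂)!) ·
₂F₁(−j+m₁, −j−m₂; 1+m₁−m₂; −tan²(θ/2))`, the hypergeometric series being a terminating sum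
written with rising factorials (Pochhammer symbols). -/
theorem wignerd_hypergeometric (j m₁ m₂ : ℝ) (hj : HalfInt j) (hj0 : 0 ≤ j)
    (hm₁ : HalfInt m₁) (hm₂ : HalfInt m₂)
    (hjm₁ : ∃ a : ℤ, j + m₁ = a) (hjm₂ : ∃ a : ℤ, j + m₂ = a)
    (hm₁l : -j ≤ m₁) (hm₁u : m₁ ≤ j) (hm₂l : -j ≤ m₂) (hm₂u : m₂ ≤ j)
    (hm : m₁ ≥ m₂) (θ : ℝ) (hθ : θ ∈ Set.Ioo 0 Real.pi) :
    wignerd j m₁ m₂ θ =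
      Real.sin (θ / 2) ^ ⌊m₁ - m₂⌋ * Real.cos (θ / 2) ^ ⌊2 * j - m₁ + m₂⌋ /
        (Real.Gamma (j - m₁ + 1) * Real.Gamma (m₁ - m₂ + 1) * Real.Gamma (j + m₂ + 1)) *
        ∑ s ∈ Finset.range (⌊j - m₁⌋.toNat + 1),
          ((ascPochhammer ℝ s).eval (-j + m₁) * (ascPochhammer ℝ s).eval (-j - m₂)) /
            ((ascPochhammer ℝ s).eval (1 + m₁ - m₂) * (s.factorial : ℝ)) *
            (-(Real.tan (θ / 2)) ^ 2) ^ s := by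
  obtain ⟨θ0, θπ⟩ := hθ
  obtain ⟨t, ht⟩ := hj
  obtain ⟨a₀, ha₀⟩ := hjm₁
  obtain ⟨b₀, hb₀⟩ := hjm₂
  have h2j : 2 * j = (t : ℝ) := by rw [ht]; ring
  -- natural number parameters
  have hb0nn : (0:ℤ) ≤ b₀ := by
    have : (0:ℝ) ≤ (b₀:ℝ) := by rw [← hb₀]; linarith
    exact_mod_cast this
  have hn0nn : (0:ℤ) ≤ t - a₀ := by
    have : (0:ℝ) ≤ ((t - a₀ : ℤ):ℝ) := by push_cast; linarith
    exact_mod_cast this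
  have hk0nn : (0:ℤ) ≤ a₀ - b₀ := by
    have : (0:ℝ) ≤ ((a₀ - b₀ : ℤ):ℝ) := by push_cast; linarith
    exact_mod_cast this
  set b : ℕ := b₀.toNat with hb_def
  set n : ℕ := (t - a₀).toNat with hn_def
  set k : ℕ := (a₀ - b₀).toNat with hk_def
  have hb : j + m₂ = (b : ℝ) := by
    rw [hb₀, hb_def]; norm_cast; exact (Int.toNat_of_nonneg hb0nn).symm
  have hn : j - m₁ = (n : ℝ) := by
    have h1 : ((t - a₀ : ℤ):ℝ) = j - m₁ := by push_cast; linarith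
    rw [← h1, hn_def]; norm_cast; exact (Int.toNat_of_nonneg hn0nn).symm
  have hk : m₁ - m₂ = (k : ℝ) := by
    have h1 : ((a₀ - b₀ : ℤ):ℝ) = m₁ - m₂ := by push_cast; linarith
    rw [← h1, hk_def]; norm_cast; exact (Int.toNat_of_nonneg hk0nn).symm
  have ha : j + m₁ = (b : ℝ) + k := by linarith
  have hc : j - m₂ = (n : ℝ) + k := by linarith
  -- trig facts
  have hC : 0 < Real.cos (θ / 2) := by
    apply Real.cos_pos_of_mem_Ioo
    constructor <;> [linarith [Real.pi_pos]; linarith]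
  have hS : 0 < Real.sin (θ / 2) := by
    apply Real.sin_pos_of_pos_of_lt_pi <;> linarith [Real.pi_pos]
  -- floors and ceilings
  have e1 : ⌈m₁ - m₂⌉ = (k : ℤ) := by rw [hk, Int.ceil_natCast]
  have e2 : ⌈m₂ - m₁⌉ = -(k : ℤ) := by
    have h1 : m₂ - m₁ = ((-(k:ℤ) : ℤ) : ℝ) := by push_cast; linarith
    rw [h1, Int.ceil_intCast]
  have e3 : ⌊min (j - m₂) (j + m₁)⌋ = ((min n b + k : ℕ) : ℤ) := by
    have h1 : min (j - m₂) (j + m₁) = ((min n b + k : ℕ) : ℝ) := by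
      rw [hc, ha]; push_cast [Nat.cast_min]; rw [min_add_add_right]
    rw [h1, Int.floor_natCast]
  have e4 : ⌊2*j + m₁ - m₂⌋ = ((n + b + 2*k : ℕ) : ℤ) := by
    have h1 : 2*j + m₁ - m₂ = ((n + b + 2*k : ℕ) : ℝ) := by push_cast; linarith
    rw [h1, Int.floor_natCast]
  have e5 : ⌊m₁ - m₂⌋ = (k : ℤ) := by rw [hk, Int.floor_natCast]
  have e6 : ⌊2*j - m₁ + m₂⌋ = ((n + b : ℕ) : ℤ) := by
    have h1 : 2*j - m₁ + m₂ = ((n + b : ℕ) : ℝ) := by push_cast; linarith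
    rw [h1, Int.floor_natCast]
  have e7 : ⌊j - m₁⌋.toNat = n := by rw [hn, Int.floor_natCast, Int.toNat_natCast]
  have e8 : max 0 (k:ℤ) = (k:ℤ) := max_eq_right (Int.natCast_nonneg k)
  have g1 : -j + m₁ = -(n:ℝ) := by linarith
  have g2 : -j - m₂ = -(b:ℝ) := by linarith
  have g3 : (1:ℝ) + m₁ - m₂ = (k:ℝ) + 1 := by linarith
  have g4 : m₂ - m₁ = -(k:ℝ) := by linarith
  rw [wignerd]
  simp only [e1, e2, e3, e4, e5, e6, e7, e8]
  simp only [ha, hb, hc, hn, hk, g1, g2, g3, g4]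
  have hmap : Finset.Icc ((k:ℕ):ℤ) (((min n b + k : ℕ)):ℤ) =
      Finset.map ⟨fun s : ℕ => (s:ℤ) + (k:ℤ), show Function.Injective (fun s : ℕ => (s:ℤ) + (k:ℤ)) from fun x y h => by simpa using h⟩
        (Finset.range (min n b + 1)) := by
    ext x
    simp only [Finset.mem_Icc, Finset.mem_map, Finset.mem_range, Function.Embedding.coeFn_mk]
    constructor
    · rintro ⟨h1, h2⟩
      refine ⟨(x - k).toNat, by omega, by omega⟩
    · rintro ⟨s, hs, rfl⟩
      omega
  rw [hmap, Finset.sum_map]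
  simp only [Function.Embedding.coeFn_mk]
  refine Eq.trans (Finset.sum_subset
      (Finset.range_subset_range.mpr (show min n b + 1 ≤ n + 1 by omega)) ?_) ?_
  · intro s hs hns
    simp only [Finset.mem_range] at hs hns
    have hbs : b + 1 ≤ s := by omega
    have hval : (b:ℝ) + (k:ℝ) - ((((s:ℤ) + (k:ℤ)) : ℤ):ℝ) + 1 = -((s - (b+1) : ℕ):ℝ) := by
      rw [Nat.cast_sub hbs]; push_cast; ring
    rw [hval, Real.Gamma_neg_nat_eq_zero]
    simp
  · rw [Finset.mul_sum]
    refine Finset.sum_congr rfl fun s hs => ?_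
    simp only [Finset.mem_range] at hs
    have hsn : s ≤ n := by omega
    by_cases hsb : s ≤ b
    · have E1 : (-((k:ℕ):ℤ) + ((s:ℤ) + (k:ℤ))) = ((s:ℕ):ℤ) := by omega
      have E2 : (-((k:ℕ):ℤ) + 2 * ((s:ℤ) + (k:ℤ))) = ((k + 2*s : ℕ):ℤ) := by push_cast; ring
      have E3 : (((n + b + 2*k : ℕ)):ℤ) - 2 * ((s:ℤ) + (k:ℤ)) = (((n-s) + (b-s) : ℕ):ℤ) := by
        omega
      have G1 : (b:ℝ) + (k:ℝ) - ((((s:ℤ) + (k:ℤ)) : ℤ):ℝ) + 1 = ((b - s : ℕ):ℝ) + 1 := by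
        rw [Nat.cast_sub hsb]; push_cast; ring
      have G2 : ((((s:ℤ) + (k:ℤ)) : ℤ):ℝ) + 1 = ((k + s : ℕ):ℝ) + 1 := by push_cast; ring
      have G3 : -(k:ℝ) + ((((s:ℤ) + (k:ℤ)) : ℤ):ℝ) + 1 = ((s:ℕ):ℝ) + 1 := by push_cast; ring
      have G4 : (n:ℝ) + (k:ℝ) - ((((s:ℤ) + (k:ℤ)) : ℤ):ℝ) + 1 = ((n - s : ℕ):ℝ) + 1 := by
        rw [Nat.cast_sub hsn]; push_cast; ring
      rw [E1, E2, E3, G1, G2, G3, G4, Real.Gamma_nat_eq_factorial, Real.Gamma_nat_eq_factorial,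
        Real.Gamma_nat_eq_factorial, Real.Gamma_nat_eq_factorial, Real.Gamma_nat_eq_factorial,
        Real.Gamma_nat_eq_factorial, Real.Gamma_nat_eq_factorial,
        zpow_natCast, zpow_natCast, zpow_natCast, zpow_natCast, zpow_natCast,
        asc_eval_neg_nat, asc_eval_neg_nat, asc_eval_nat_succ, Real.tan_eq_sin_div_cos]
      have F1 : (n.factorial : ℝ) = ((n - s).factorial : ℝ) * (n.descFactorial s : ℝ) := by
        exact_mod_cast (Nat.factorial_mul_descFactorial hsn).symm
      have F2 : (b.factorial : ℝ) = ((b - s).factorial : ℝ) * (b.descFactorial s : ℝ) := by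
        exact_mod_cast (Nat.factorial_mul_descFactorial hsb).symm
      have F3 : ((k + s).factorial : ℝ) = (k.factorial : ℝ) * ((k+1).ascFactorial s : ℝ) := by
        exact_mod_cast (Nat.factorial_mul_ascFactorial k s).symm
      rw [F1, F2, F3, show n + b = ((n - s) + (b - s)) + (s + s) by omega]
      have ne1 : ((n - s).factorial : ℝ) ≠ 0 := Nat.cast_ne_zero.mpr (Nat.factorial_ne_zero _)
      have ne2 : ((b - s).factorial : ℝ) ≠ 0 := Nat.cast_ne_zero.mpr (Nat.factorial_ne_zero _)
      have ne3 : (k.factorial : ℝ) ≠ 0 := Nat.cast_ne_zero.mpr (Nat.factorial_ne_zero _)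
      have ne4 : (s.factorial : ℝ) ≠ 0 := Nat.cast_ne_zero.mpr (Nat.factorial_ne_zero _)
      have ne5 : (((k+1).ascFactorial s : ℕ) : ℝ) ≠ 0 :=
        Nat.cast_ne_zero.mpr (Nat.ascFactorial_pos k s).ne'
      have ne6 : ((n.descFactorial s : ℕ) : ℝ) ≠ 0 :=
        Nat.cast_ne_zero.mpr (by simpa [Nat.descFactorial_eq_zero_iff_lt, not_lt] using hsn)
      have ne7 : ((b.descFactorial s : ℕ) : ℝ) ≠ 0 :=
        Nat.cast_ne_zero.mpr (by simpa [Nat.descFactorial_eq_zero_iff_lt, not_lt] using hsb)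
      have key : ∀ A B : ℝ, (-1:ℝ)^s * A * ((-1:ℝ)^s * B) = A * B := fun A B => by
        rw [mul_mul_mul_comm, ← pow_add, ← two_mul, pow_mul]; norm_num
      rw [key]
      rw [show (-(Real.sin (θ/2)/Real.cos (θ/2))^2) = (-1) * (Real.sin (θ/2)/Real.cos (θ/2))^2 by ring,
        mul_pow, ← pow_mul, div_pow]
      have neC : Real.cos (θ/2) ^ (2*s) ≠ 0 := pow_ne_zero _ hC.ne'
      field_simp [ne1, ne2, ne3, ne4, ne5, ne6, ne7, neC]
      ring
    · have hbs : b + 1 ≤ s := by omega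
      have hval : (b:ℝ) + (k:ℝ) - ((((s:ℤ) + (k:ℤ)) : ℤ):ℝ) + 1 = -((s - (b+1) : ℕ):ℝ) := by
        rw [Nat.cast_sub hbs]; push_cast; ring
      rw [hval, Real.Gamma_neg_nat_eq_zero, asc_eval_neg_nat b s,
        Nat.descFactorial_eq_zero_iff_lt.mpr (show b < s by omega)]
      simp
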